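/- Let a : [0,∞) → ℝ^L be a differentiable solution of a'(t) = f(a(t)) with a_i(0) ≥ 0 for all i. Then: (1) for every index i with a_i(0) > 0 one has a_i(t) > 0 for all t > 0; and (2) if D = 0, then for every index i with a_i(0) = 0 one has a_i(t) = 0 for all t ≥ 0. -/

import Mathlib

open Finset Filter

/-- `auxN G κ a i = κ + ∑_{j ~ i} a_j`. -/
noncomputable def auxN {L : ℕ} (G : SimpleGraph (Fin L)) [DecidableRel G.Adj] (κ : ℝ)
    (a : Fin L → ℝ) (i : Fin L) : ℝ :=
  κ + ∑ j ∈ G.neighborFinset i, a j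

/-- The auxin transport vector field
`f_i(a) = D·∑_{k ~ i}(a_k − a_i) + T·∑_{k ~ i}(a_k·a_i/N_k(a) − a_i·a_k/N_i(a))`. -/
noncomputable def auxF {L : ℕ} (G : SimpleGraph (Fin L)) [DecidableRel G.Adj] (κ D T : ℝ)
    (a : Fin L → ℝ) (i : Fin L) : ℝ :=
  D * ∑ k ∈ G.neighborFinset i, (a k - a i) +
    T * ∑ k ∈ G.neighborFinset i,
      (a k * a i / auxN G κ a k - a i * a k / auxN G κ a i)

variable {L : ℕ} {G : SimpleGraph (Fin L)} [DecidableRel G.Adj] {κ D T : ℝ}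

lemma card_nb_le (G : SimpleGraph (Fin L)) [DecidableRel G.Adj] (i : Fin L) :
    ((G.neighborFinset i).card : ℝ) ≤ (L : ℝ) := by
  have := Finset.card_le_univ (G.neighborFinset i)
  simp only [Finset.card_univ, Fintype.card_fin] at this
  exact_mod_cast this

lemma auxN_pos (hκ : 0 < κ) {a : Fin L → ℝ} (ha : ∀ k, 0 ≤ a k) (i : Fin L) :
    0 < auxN G κ a i := by
  have : (0:ℝ) ≤ ∑ j ∈ G.neighborFinset i, a j :=
    Finset.sum_nonneg fun j _ => ha j
  unfold auxN; linarith

lemma auxN_ge {a : Fin L → ℝ} {m : ℝ} (hm : 0 ≤ m) (h : ∀ j, -m ≤ a j) (k : Fin L) :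
    κ - L * m ≤ auxN G κ a k := by
  have h1 : ∑ j ∈ G.neighborFinset k, (-m) ≤ ∑ j ∈ G.neighborFinset k, a j :=
    Finset.sum_le_sum fun j _ => h j
  rw [Finset.sum_const, nsmul_eq_mul] at h1
  have h2 := card_nb_le G k
  unfold auxN
  nlinarith

/-- Boundary estimate for the positivity part. -/
lemma auxF_ge_of_nonneg (hκ : 0 < κ) (hD : 0 ≤ D) (hT : 0 ≤ T) (a : Fin L → ℝ)
    (ha : ∀ k, 0 ≤ a k) (i : Fin L) :
    -((D * L + T) * a i) ≤ auxF G κ D T a i := by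
  have hNpos : ∀ k, 0 < auxN G κ a k := auxN_pos hκ ha
  have h1 : -((L:ℝ) * a i) ≤ ∑ k ∈ G.neighborFinset i, (a k - a i) := by
    have hs : ∑ k ∈ G.neighborFinset i, (-(a i)) ≤ ∑ k ∈ G.neighborFinset i, (a k - a i) :=
      Finset.sum_le_sum fun k _ => by linarith [ha k]
    rw [Finset.sum_const, nsmul_eq_mul] at hs
    have h2 := card_nb_le G i
    nlinarith [ha i]
  have h2 : -(a i) ≤ ∑ k ∈ G.neighborFinset i,
      (a k * a i / auxN G κ a k - a i * a k / auxN G κ a i) := by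
    have hstep : ∑ k ∈ G.neighborFinset i, (-(a i * a k / auxN G κ a i)) ≤
        ∑ k ∈ G.neighborFinset i,
          (a k * a i / auxN G κ a k - a i * a k / auxN G κ a i) := by
      refine Finset.sum_le_sum fun k _ => ?_
      have : 0 ≤ a k * a i / auxN G κ a k :=
        div_nonneg (mul_nonneg (ha k) (ha i)) (hNpos k).le
      linarith
    have hsum : ∑ k ∈ G.neighborFinset i, (-(a i * a k / auxN G κ a i)) =
        -(a i * (∑ k ∈ G.neighborFinset i, a k) / auxN G κ a i) := by
      rw [Finset.mul_sum, Finset.sum_div, Finset.sum_neg_distrib]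
    rw [hsum] at hstep
    refine le_trans ?_ hstep
    have hS : (∑ k ∈ G.neighborFinset i, a k) ≤ auxN G κ a i := by
      unfold auxN; linarith
    have hS0 : (0:ℝ) ≤ ∑ k ∈ G.neighborFinset i, a k :=
      Finset.sum_nonneg fun k _ => ha k
    have hNi := hNpos i
    rw [neg_le_neg_iff, div_le_iff₀ hNi]
    nlinarith [ha i]
  unfold auxF
  nlinarith [mul_le_mul_of_nonneg_left h1 hD, mul_le_mul_of_nonneg_left h2 hT]

/-- Boundary estimate for the `D = 0` part. -/
lemma auxF_le_of_zeroD (hκ : 0 < κ) (hT : 0 ≤ T) (a : Fin L → ℝ) {M : ℝ} (hM0 : 0 ≤ M)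
    (ha : ∀ k, 0 ≤ a k) (hM : ∀ k, a k ≤ M) (i : Fin L) :
    auxF G κ 0 T a i ≤ T * (L * M / κ) * a i := by
  have hNpos : ∀ k, 0 < auxN G κ a k := auxN_pos hκ ha
  have h2 : ∑ k ∈ G.neighborFinset i,
      (a k * a i / auxN G κ a k - a i * a k / auxN G κ a i) ≤ (L * M / κ) * a i := by
    have hstep : ∑ k ∈ G.neighborFinset i,
        (a k * a i / auxN G κ a k - a i * a k / auxN G κ a i) ≤
        ∑ k ∈ G.neighborFinset i, (M * a i / κ) := by
      refine Finset.sum_le_sum fun k _ => ?_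
      have hk1 : 0 ≤ a i * a k / auxN G κ a i :=
        div_nonneg (mul_nonneg (ha i) (ha k)) (hNpos i).le
      have hκN : κ ≤ auxN G κ a k := by
        have h0 : (0:ℝ) ≤ ∑ j ∈ G.neighborFinset k, a j :=
          Finset.sum_nonneg fun j _ => ha j
        unfold auxN; linarith
      have hnum : a k * a i ≤ M * a i := mul_le_mul_of_nonneg_right (hM k) (ha i)
      have hmain : a k * a i / auxN G κ a k ≤ M * a i / κ :=
        div_le_div₀ (mul_nonneg hM0 (ha i)) hnum hκ hκN
      linarith
    rw [Finset.sum_const, nsmul_eq_mul] at hstep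
    have hcard := card_nb_le G i
    have hpos : 0 ≤ M * a i / κ := div_nonneg (mul_nonneg hM0 (ha i)) hκ.le
    calc ∑ k ∈ G.neighborFinset i,
        (a k * a i / auxN G κ a k - a i * a k / auxN G κ a i)
        ≤ (G.neighborFinset i).card * (M * a i / κ) := hstep
      _ ≤ L * (M * a i / κ) := mul_le_mul_of_nonneg_right hcard hpos
      _ = (L * M / κ) * a i := by ring
  unfold auxF
  have := mul_le_mul_of_nonneg_left h2 hT
  nlinarith

/-- Boundary estimate for the nonnegativity part. -/
lemma neg_auxF_le (hκ : 0 < κ) (hD : 0 ≤ D) (hT : 0 ≤ T) (a : Fin L → ℝ) {m M : ℝ}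
    (hm : 0 ≤ m) (hM0 : 0 ≤ M) (hM : ∀ k, |a k| ≤ M) (hlow : ∀ k, -m ≤ a k) {j : Fin L}
    (hj : a j = -m) (hN : ∀ k, κ / 2 ≤ auxN G κ a k) :
    -auxF G κ D T a j ≤ 4 * T * L * M / κ * m := by
  have hNpos : ∀ k, 0 < auxN G κ a k := fun k => lt_of_lt_of_le (by linarith) (hN k)
  have h1 : 0 ≤ ∑ k ∈ G.neighborFinset j, (a k - a j) := by
    refine Finset.sum_nonneg fun k _ => ?_
    have := hlow k; rw [hj]; linarith
  have h2 : -(L * (4 * m * M / κ)) ≤ ∑ k ∈ G.neighborFinset j,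
      (a k * a j / auxN G κ a k - a j * a k / auxN G κ a j) := by
    have hstep : ∑ k ∈ G.neighborFinset j, (-(4 * m * M / κ)) ≤
        ∑ k ∈ G.neighborFinset j,
          (a k * a j / auxN G κ a k - a j * a k / auxN G κ a j) := by
      refine Finset.sum_le_sum fun k _ => ?_
      have e1 : |a k * a j / auxN G κ a k| ≤ 2 * m * M / κ := by
        rw [abs_div, abs_of_pos (hNpos k)]
        have h2k : |a k * a j| ≤ M * m := by
          rw [abs_mul, hj, abs_neg, abs_of_nonneg hm]
          exact mul_le_mul_of_nonneg_right (hM k) hm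
        calc |a k * a j| / auxN G κ a k ≤ (M * m) / (κ/2) := by
              apply div_le_div₀ (by positivity) h2k (by linarith) (hN k)
          _ = 2 * m * M / κ := by ring
      have e2 : |a j * a k / auxN G κ a j| ≤ 2 * m * M / κ := by
        rw [abs_div, abs_of_pos (hNpos j)]
        have h2k : |a j * a k| ≤ M * m := by
          rw [abs_mul, hj, abs_neg, abs_of_nonneg hm, mul_comm]
          exact mul_le_mul_of_nonneg_right (hM k) hm
        calc |a j * a k| / auxN G κ a j ≤ (M * m) / (κ/2) := by
              apply div_le_div₀ (by positivity) h2k (by linarith) (hN j)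
          _ = 2 * m * M / κ := by ring
      have h3 := (abs_le.1 e1).1
      have h4 := (abs_le.1 e2).2
      have he : 4 * m * M / κ = 2 * m * M / κ + 2 * m * M / κ := by ring
      linarith
    rw [Finset.sum_const, nsmul_eq_mul] at hstep
    have hcard := card_nb_le G j
    have hpos : 0 ≤ 4 * m * M / κ := by positivity
    nlinarith
  unfold auxF
  have t1 : 0 ≤ D * ∑ k ∈ G.neighborFinset j, (a k - a j) := mul_nonneg hD h1
  have t2 := mul_le_mul_of_nonneg_left h2 hT
  have he2 : T * -((L:ℝ) * (4 * m * M / κ)) = -(4 * T * L * M / κ * m) := by ring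
  linarith

lemma aux_nonneg {L : ℕ} (hL : 1 ≤ L) (G : SimpleGraph (Fin L)) [DecidableRel G.Adj]
    (κ D T : ℝ) (hκ : 0 < κ) (hD : 0 ≤ D) (hT : 0 ≤ T)
    (a : ℝ → Fin L → ℝ)
    (hderiv : ∀ t, 0 ≤ t → HasDerivAt a (auxF G κ D T (a t)) t)
    (hnonneg : ∀ i, 0 ≤ a 0 i) :
    ∀ t, 0 ≤ t → ∀ i, 0 ≤ a t i := by
  classical
  haveI : Nonempty (Fin L) := Fin.pos_iff_nonempty.mp hL
  have hne : (Finset.univ : Finset (Fin L)).Nonempty := Finset.univ_nonempty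
  have hL0 : (0:ℝ) < L := by exact_mod_cast hL
  have hcd : ∀ x, 0 ≤ x → ∀ i, HasDerivAt (fun s => a s i) (auxF G κ D T (a x) i) x :=
    fun x hx i => hasDerivAt_pi.mp (hderiv x hx) i
  have hcc : ∀ x, 0 ≤ x → ∀ i, ContinuousAt (fun s => a s i) x :=
    fun x hx i => (hcd x hx i).continuousAt
  intro t ht i
  -- uniform bound on `[0, t]`
  have hconta : ContinuousOn a (Set.Icc 0 t) :=
    fun s hs => ((hderiv s hs.1).continuousAt).continuousWithinAt
  obtain ⟨C, hC⟩ := isCompact_Icc.exists_bound_of_continuousOn hconta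
  set M : ℝ := max C 1 with hMdef
  have hM1 : (1:ℝ) ≤ M := le_max_right _ _
  have hM0 : (0:ℝ) ≤ M := by linarith
  have hMb : ∀ x ∈ Set.Icc (0:ℝ) t, ∀ k, |a x k| ≤ M := by
    intro x hx k
    have h1 : ‖a x k‖ ≤ ‖a x‖ := norm_le_pi_norm (a x) k
    have h2 := hC x hx
    calc |a x k| = ‖a x k‖ := (Real.norm_eq_abs _).symm
      _ ≤ ‖a x‖ := h1
      _ ≤ C := h2
      _ ≤ M := le_max_left _ _
  set K : ℝ := 1 + 4 * T * L * M / κ with hKdef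
  have hKq : 0 ≤ 4 * T * L * M / κ := by positivity
  have hK1 : (1:ℝ) ≤ K := by rw [hKdef]; linarith
  set ε₀ : ℝ := κ / (2 * L * Real.exp (K * t)) with hε₀def
  have hexpKt : 0 < Real.exp (K * t) := Real.exp_pos _
  have hε₀ : 0 < ε₀ := by rw [hε₀def]; positivity
  -- the sup of the negated coordinates
  set h : ℝ → ℝ := fun s => Finset.univ.sup' hne (fun j => -a s j) with hdef
  have hAne : ∀ s, ((Finset.univ : Finset (Fin L)).filter (fun j => -a s j = h s)).Nonempty := by
    intro s
    obtain ⟨j, _, hj⟩ := Finset.exists_mem_eq_sup' hne (fun j => -a s j)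
    exact ⟨j, Finset.mem_filter.2 ⟨Finset.mem_univ _, hj.symm⟩⟩
  set f' : ℝ → ℝ := fun s =>
    ((Finset.univ : Finset (Fin L)).filter (fun j => -a s j = h s)).sup' (hAne s)
      (fun j => -auxF G κ D T (a s) j) with hf'def
  have hconth : ContinuousOn h (Set.Icc 0 t) := by
    intro x hx
    exact (ContinuousAt.finset_sup'_apply hne fun j _ => (hcc x hx.1 j).neg).continuousWithinAt
  -- the key fencing estimate
  have key : ∀ ε : ℝ, 0 < ε → ε ≤ ε₀ → ∀ x ∈ Set.Icc (0:ℝ) t, h x ≤ ε * Real.exp (K * x) := by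
    intro ε hε hεε₀
    have hB : ∀ x : ℝ, HasDerivAt (fun s => ε * Real.exp (K * s)) (ε * (Real.exp (K * x) * K)) x := by
      intro x
      have h1 : HasDerivAt (fun s : ℝ => K * s) K x := by
        simpa using (hasDerivAt_id x).const_mul K
      exact ((Real.hasDerivAt_exp (K * x)).comp x h1).const_mul ε
    refine image_le_of_liminf_slope_right_lt_deriv_boundary (f' := f') hconth ?_ ?_ hB ?_
    · -- liminf slope bound
      intro x hx r hr
      obtain ⟨k₀, hk₀⟩ := hAne x
      have hk₀' : -a x k₀ = h x := (Finset.mem_filter.mp hk₀).2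
      have E1 : ∀ᶠ z in nhdsWithin x (Set.Ioi x), ∀ j ∈
          (Finset.univ : Finset (Fin L)).filter (fun j => -a x j = h x),
          slope (fun s => -a s j) x z < r := by
        rw [eventually_all_finset]
        intro j hj
        have hd : HasDerivAt (fun s => -a s j) (-auxF G κ D T (a x) j) x := (hcd x hx.1 j).neg
        have hts := hasDerivAt_iff_tendsto_slope.mp hd
        have hlt : -auxF G κ D T (a x) j < r :=
          lt_of_le_of_lt (Finset.le_sup' (fun j => -auxF G κ D T (a x) j) hj) hr
        exact (hts.eventually_lt_const hlt).filter_mono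
          (nhdsWithin_mono x fun z hz => ne_of_gt hz)
      have E2 : ∀ᶠ z in nhdsWithin x (Set.Ioi x), ∀ j : Fin L,
          j ∉ (Finset.univ : Finset (Fin L)).filter (fun j => -a x j = h x) →
          -a z j < -a z k₀ := by
        refine eventually_all.mpr fun j => ?_
        by_cases hc : j ∈ (Finset.univ : Finset (Fin L)).filter (fun j => -a x j = h x)
        · exact Filter.Eventually.of_forall fun z hj' => absurd hc hj'
        · have hle : -a x j ≤ h x := Finset.le_sup' (fun j => -a x j) (Finset.mem_univ j)
          have hne' : -a x j ≠ h x := fun he => hc (Finset.mem_filter.mpr ⟨Finset.mem_univ _, he⟩)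
          have hlt : -a x j < -a x k₀ := by rw [hk₀']; exact hle.lt_of_ne hne'
          have := ((hcc x hx.1 j).neg.eventually_lt (hcc x hx.1 k₀).neg hlt).filter_mono
            (nhdsWithin_le_nhds (s := Set.Ioi x))
          exact this.mono fun z hz _ => hz
      refine ((E1.and E2).frequently).mono ?_
      rintro z ⟨hz1, hz2⟩
      obtain ⟨jz, hjzmem, hjz⟩ := Finset.exists_mem_eq_sup' hne (fun j => -a z j)
      have hjzA : jz ∈ (Finset.univ : Finset (Fin L)).filter (fun j => -a x j = h x) := by
        by_contra hno
        have h1 := hz2 jz hno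
        have h2 : -a z k₀ ≤ h z := Finset.le_sup' (fun j => -a z j) (Finset.mem_univ k₀)
        have h3 : h z = -a z jz := hjz
        linarith
      have hxjz : -a x jz = h x := (Finset.mem_filter.mp hjzA).2
      have hslope : slope h x z = slope (fun s => -a s jz) x z := by
        rw [slope_def_field, slope_def_field]
        have h3 : h z = -a z jz := hjz
        rw [h3, ← hxjz]
      rw [hslope]
      exact hz1 jz hjzA
    · -- initial condition
      refine Finset.sup'_le _ _ fun j _ => ?_
      have h1 := hnonneg j
      have h2 : 0 < ε * Real.exp (K * 0) := by positivity
      linarith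
    · -- boundary bound
      intro x hx hbd
      set m : ℝ := ε * Real.exp (K * x) with hmdef
      have hm : 0 < m := by rw [hmdef]; positivity
      have hlow : ∀ k, -m ≤ a x k := by
        intro k
        have h1 : -a x k ≤ h x := Finset.le_sup' (fun j => -a x j) (Finset.mem_univ k)
        rw [hbd] at h1; linarith
      have hxIcc : x ∈ Set.Icc (0:ℝ) t := ⟨hx.1, hx.2.le⟩
      have hmε₀ : m ≤ ε₀ * Real.exp (K * t) := by
        have h1 : Real.exp (K * x) ≤ Real.exp (K * t) :=
          Real.exp_le_exp.mpr (mul_le_mul_of_nonneg_left hx.2.le (by linarith))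
        calc m ≤ ε * Real.exp (K * t) := mul_le_mul_of_nonneg_left h1 hε.le
          _ ≤ ε₀ * Real.exp (K * t) := mul_le_mul_of_nonneg_right hεε₀ hexpKt.le
      have hLm : L * m ≤ κ / 2 := by
        have : ε₀ * Real.exp (K * t) = κ / (2 * L) := by
          rw [hε₀def]; field_simp
        have h2 : m ≤ κ / (2 * L) := by rw [← this]; exact hmε₀
        rw [le_div_iff₀ (by linarith : (0:ℝ) < 2 * L)] at h2
        nlinarith
      have hNcond : ∀ k, κ / 2 ≤ auxN G κ (a x) k := by
        intro k
        have := auxN_ge (G := G) (κ := κ) hm.le hlow k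
        linarith
      rw [hf'def]
      refine (Finset.sup'_lt_iff _).mpr fun j hj => ?_
      have hjx : a x j = -m := by
        have h1 := (Finset.mem_filter.mp hj).2
        rw [hbd] at h1; linarith
      have hbound := neg_auxF_le (G := G) hκ hD hT (a x) hm.le hM0
        (fun k => hMb x hxIcc k) hlow hjx hNcond
      have hKm : 4 * T * L * M / κ * m < ε * (Real.exp (K * x) * K) := by
        have : ε * (Real.exp (K * x) * K) = K * m := by rw [hmdef]; ring
        rw [this, hKdef]
        nlinarith
      exact lt_of_le_of_lt hbound hKm
  -- conclude
  have hfin : ∀ δ : ℝ, 0 < δ → -a t i ≤ δ := by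
    intro δ hδ
    set ε : ℝ := min ε₀ (δ / Real.exp (K * t)) with hεdef
    have hεpos : 0 < ε := lt_min hε₀ (by positivity)
    have h1 : -a t i ≤ h t := Finset.le_sup' (fun j => -a t j) (Finset.mem_univ i)
    have h2 : h t ≤ ε * Real.exp (K * t) :=
      key ε hεpos (min_le_left _ _) t ⟨ht, le_rfl⟩
    have h3 : ε * Real.exp (K * t) ≤ δ := by
      calc ε * Real.exp (K * t) ≤ (δ / Real.exp (K * t)) * Real.exp (K * t) :=
            mul_le_mul_of_nonneg_right (min_le_right _ _) hexpKt.le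
        _ = δ := div_mul_cancel₀ _ (ne_of_gt hexpKt)
    linarith
  by_contra hcon
  push_neg at hcon
  have := hfin (-a t i / 2) (by linarith)
  linarith

/-- Positivity is preserved; for pure transport (`D = 0`), zero components
stay zero. -/
theorem auxin_positivity {L : ℕ} (hL : 1 ≤ L) (G : SimpleGraph (Fin L)) [DecidableRel G.Adj]
    (κ D T : ℝ) (hκ : 0 < κ) (hD : 0 ≤ D) (hT : 0 < T)
    (a : ℝ → Fin L → ℝ)
    (hderiv : ∀ t, 0 ≤ t → HasDerivAt a (auxF G κ D T (a t)) t)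
    (hnonneg : ∀ i, 0 ≤ a 0 i) :
    (∀ i, 0 < a 0 i → ∀ t, 0 < t → 0 < a t i) ∧
    (D = 0 → ∀ i, a 0 i = 0 → ∀ t, 0 ≤ t → a t i = 0) := by
  classical
  have hT0 : 0 ≤ T := hT.le
  have hnn := aux_nonneg hL G κ D T hκ hD hT0 a hderiv hnonneg
  have hL0 : (0:ℝ) < L := by exact_mod_cast hL
  have hcd : ∀ x, 0 ≤ x → ∀ i, HasDerivAt (fun s => a s i) (auxF G κ D T (a x) i) x :=
    fun x hx i => hasDerivAt_pi.mp (hderiv x hx) i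
  constructor
  · -- positivity
    intro i hi t ht
    set c : ℝ := a 0 i with hcdef
    set Cc : ℝ := D * L + T + 1 with hCcdef
    have hCc : 0 < Cc := by rw [hCcdef]; positivity
    have hB : ∀ x : ℝ, HasDerivAt (fun s => -(c * Real.exp (-Cc * s)))
        (c * Cc * Real.exp (-Cc * x)) x := by
      intro x
      have h1 : HasDerivAt (fun s : ℝ => -Cc * s) (-Cc) x := by
        simpa using (hasDerivAt_id x).const_mul (-Cc)
      have h2 := (((Real.hasDerivAt_exp (-Cc * x)).comp x h1).const_mul c).neg
      exact h2.congr_deriv (by ring)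
    have key : ∀ x ∈ Set.Icc (0:ℝ) t, -a x i ≤ -(c * Real.exp (-Cc * x)) := by
      refine image_le_of_deriv_right_lt_deriv_boundary
        (f' := fun s => -auxF G κ D T (a s) i) ?_ ?_ ?_ hB ?_
      · exact fun s hs => (((hcd s hs.1 i).neg).continuousAt).continuousWithinAt
      · exact fun x hx => ((hcd x hx.1 i).neg).hasDerivWithinAt
      · simp [hcdef]
      · intro x hx hbd
        set m : ℝ := c * Real.exp (-Cc * x) with hmdef
        have hm : 0 < m := by rw [hmdef]; positivity
        have hxi : a x i = m := by
          have : -a x i = -m := hbd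
          linarith
        have hbound := auxF_ge_of_nonneg (G := G) hκ hD hT0 (a x) (fun k => hnn x hx.1 k) i
        rw [hxi] at hbound
        have he : c * Cc * Real.exp (-Cc * x) = Cc * m := by rw [hmdef]; ring
        rw [he, hCcdef]
        show -auxF G κ D T (a x) i < (D * ↑L + T + 1) * m
        nlinarith
    have := key t ⟨ht.le, le_rfl⟩
    have hpos : 0 < c * Real.exp (-Cc * t) := by positivity
    linarith
  · -- D = 0 : zeros stay zero
    intro hD0 i hi t ht
    subst hD0
    have hconta : ContinuousOn a (Set.Icc 0 t) :=
      fun s hs => ((hderiv s hs.1).continuousAt).continuousWithinAt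
    obtain ⟨C, hC⟩ := isCompact_Icc.exists_bound_of_continuousOn hconta
    set M : ℝ := max C 1 with hMdef
    have hM1 : (1:ℝ) ≤ M := le_max_right _ _
    have hM0 : (0:ℝ) ≤ M := by linarith
    have hMb : ∀ x ∈ Set.Icc (0:ℝ) t, ∀ k, a x k ≤ M := by
      intro x hx k
      have h1 : ‖a x k‖ ≤ ‖a x‖ := norm_le_pi_norm (a x) k
      have h2 := hC x hx
      have h3 : |a x k| = ‖a x k‖ := (Real.norm_eq_abs _).symm
      have := le_abs_self (a x k)
      have h4 : |a x k| ≤ M := by rw [h3]; exact h1.trans (h2.trans (le_max_left _ _))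
      linarith
    set K : ℝ := T * (L * M / κ) + 1 with hKdef
    have hKq : 0 ≤ T * (L * M / κ) := by positivity
    have hK1 : (1:ℝ) ≤ K := by rw [hKdef]; linarith
    have hexpKt : 0 < Real.exp (K * t) := Real.exp_pos _
    have keyε : ∀ ε : ℝ, 0 < ε → ∀ x ∈ Set.Icc (0:ℝ) t, a x i ≤ ε * Real.exp (K * x) := by
      intro ε hε
      have hB : ∀ x : ℝ, HasDerivAt (fun s => ε * Real.exp (K * s))
          (ε * (Real.exp (K * x) * K)) x := by
        intro x
        have h1 : HasDerivAt (fun s : ℝ => K * s) K x := by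
          simpa using (hasDerivAt_id x).const_mul K
        exact ((Real.hasDerivAt_exp (K * x)).comp x h1).const_mul ε
      refine image_le_of_deriv_right_lt_deriv_boundary
        (f' := fun s => auxF G κ 0 T (a s) i) ?_ ?_ ?_ hB ?_
      · exact fun s hs => ((hcd s hs.1 i).continuousAt).continuousWithinAt
      · exact fun x hx => (hcd x hx.1 i).hasDerivWithinAt
      · rw [hi]; positivity
      · intro x hx hbd
        set m : ℝ := ε * Real.exp (K * x) with hmdef
        have hm : 0 < m := by rw [hmdef]; positivity
        have hxIcc : x ∈ Set.Icc (0:ℝ) t := ⟨hx.1, hx.2.le⟩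
        have hbound := auxF_le_of_zeroD (G := G) hκ hT0 (a x) hM0
          (fun k => hnn x hx.1 k) (fun k => hMb x hxIcc k) i
        rw [hbd] at hbound
        have he : ε * (Real.exp (K * x) * K) = K * m := by rw [hmdef]; ring
        rw [he, hKdef]
        show auxF G κ 0 T (a x) i < (T * (↑L * M / κ) + 1) * m
        nlinarith
    have hfin : ∀ δ : ℝ, 0 < δ → a t i ≤ δ := by
      intro δ hδ
      have h1 := keyε (δ / Real.exp (K * t)) (by positivity) t ⟨ht, le_rfl⟩
      have h2 : δ / Real.exp (K * t) * Real.exp (K * t) = δ :=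
        div_mul_cancel₀ _ (ne_of_gt hexpKt)
      linarith
    have hle : a t i ≤ 0 := by
      by_contra hcon
      push_neg at hcon
      have := hfin (a t i / 2) (by linarith)
      linarith
    exact le_antisymm hle (hnn t ht i)
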